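/- Let α ∈ (0,2) and set C = (sup_{u ∈ [0,1]} |ψ''(u)|)/(2−α) + 2/α. Then for all integers n ≥ 2, all integers m with 2 ≤ m ≤ n, and all x ∈ ℝ, one has |D^α f_n(x)| ≤ C · f_{n−m}(x) + 2/(α (m−1)^α). -/

import Mathlib

open MeasureTheory Real Filter

/-- The fractional Laplacian of order `α`. -/
noncomputable def Dalpha (α : ℝ) (f : ℝ → ℝ) (x : ℝ) : ℝ :=
  ∫ h : ℝ, (f (x + h) - f x - (if |h| ≤ 1 then deriv f x * h else 0)) / |h| ^ (1 + α)

/-- The smoothing polynomial `ψ(u) = 6u⁵ − 15u⁴ + 10u³`. -/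
noncomputable def psi (u : ℝ) : ℝ := 6 * u ^ 5 - 15 * u ^ 4 + 10 * u ^ 3

/-- The cut-off functions `f_n(x) = ψ(min(max(|x| − (n−1), 0), 1))` for `n ≥ 1`, and
`f_0 ≡ 1`. -/
noncomputable def fn : ℕ → ℝ → ℝ
  | 0, _ => 1
  | n + 1, x => psi (min (max (|x| - (n : ℝ)) 0) 1)

open Set
noncomputable def dpsi (u : ℝ) : ℝ := 30 * u ^ 4 - 60 * u ^ 3 + 30 * u ^ 2
noncomputable def ddpsi (u : ℝ) : ℝ := 120 * u ^ 3 - 180 * u ^ 2 + 60 * u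
noncomputable def clamp (t : ℝ) : ℝ := min (max t 0) 1

lemma hasDerivAt_psi (t : ℝ) : HasDerivAt psi (dpsi t) t := by
  have h : HasDerivAt (fun u : ℝ => 6 * u ^ 5 - 15 * u ^ 4 + 10 * u ^ 3)
      (30 * t ^ 4 - 60 * t ^ 3 + 30 * t ^ 2) t := by
    have := (((hasDerivAt_pow 5 t).const_mul 6).sub ((hasDerivAt_pow 4 t).const_mul 15)).add
      ((hasDerivAt_pow 3 t).const_mul 10)
    convert this using 1 <;> first | rfl | (push_cast; ring)
  exact h

lemma hasDerivAt_dpsi (t : ℝ) : HasDerivAt dpsi (ddpsi t) t := by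
  have h : HasDerivAt (fun u : ℝ => 30 * u ^ 4 - 60 * u ^ 3 + 30 * u ^ 2)
      (120 * t ^ 3 - 180 * t ^ 2 + 60 * t) t := by
    have := (((hasDerivAt_pow 4 t).const_mul 30).sub ((hasDerivAt_pow 3 t).const_mul 60)).add
      ((hasDerivAt_pow 2 t).const_mul 30)
    convert this using 1 <;> first | rfl | (push_cast; ring)
  exact h

lemma deriv_deriv_psi : deriv (deriv psi) = ddpsi := by
  have h1 : deriv psi = dpsi := funext fun t => (hasDerivAt_psi t).deriv
  rw [h1]; exact funext fun t => (hasDerivAt_dpsi t).deriv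

lemma clamp_mem (t : ℝ) : clamp t ∈ Icc (0:ℝ) 1 := by
  constructor
  · exact le_min (le_max_right _ _) zero_le_one
  · exact min_le_right _ _

lemma clamp_of_nonpos {t : ℝ} (h : t ≤ 0) : clamp t = 0 := by
  simp [clamp, max_eq_right h, min_eq_left zero_le_one]

lemma clamp_of_ge_one {t : ℝ} (h : 1 ≤ t) : clamp t = 1 := by
  simp [clamp, max_eq_left (le_trans zero_le_one h), min_eq_right h]

lemma clamp_of_mem {t : ℝ} (h0 : 0 ≤ t) (h1 : t ≤ 1) : clamp t = t := by
  simp [clamp, max_eq_left h0, min_eq_left h1]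

/-- key composition lemma -/
lemma hasDerivAt_comp_clamp (p q : ℝ → ℝ) (hp : ∀ t, HasDerivAt p (q t) t)
    (h0 : q 0 = 0) (h1 : q 1 = 0) (t : ℝ) :
    HasDerivAt (fun s => p (clamp s)) (q (clamp t)) t := by
  rcases lt_trichotomy t 0 with ht | ht | ht
  · -- t < 0 : locally constant
    have hev : (fun s => p (clamp s)) =ᶠ[nhds t] fun _ => p 0 := by
      filter_upwards [Iio_mem_nhds ht] with s hs
      rw [clamp_of_nonpos (le_of_lt hs)]
    rw [clamp_of_nonpos (le_of_lt ht), h0]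
    exact (hasDerivAt_const t (p 0)).congr_of_eventuallyEq hev
  · -- t = 0 : boundary
    subst ht
    rw [clamp_of_nonpos le_rfl, h0]
    have hleft : HasDerivWithinAt (fun s => p (clamp s)) 0 (Iic 0) 0 := by
      apply (hasDerivWithinAt_const (0:ℝ) (Iic (0:ℝ)) (p 0)).congr
      · intro s hs; rw [clamp_of_nonpos hs]
      · rw [clamp_of_nonpos le_rfl]
    have hright : HasDerivWithinAt (fun s => p (clamp s)) 0 (Ici 0) 0 := by
      have hbase := ((hp 0).hasDerivWithinAt (s := Ici 0))
      rw [h0] at hbase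
      apply hbase.congr_of_eventuallyEq
      · filter_upwards [Ico_mem_nhdsGE_of_mem (by simp : (0:ℝ) ∈ Ico (0:ℝ) 1)] with s hs
        rw [clamp_of_mem hs.1 hs.2.le]
      · rw [clamp_of_nonpos le_rfl]
    have := hleft.union hright
    rw [Iic_union_Ici] at this
    exact this.hasDerivAt (by simp)
  · rcases lt_trichotomy t 1 with ht1 | ht1 | ht1
    · -- 0 < t < 1
      have hev : (fun s => p (clamp s)) =ᶠ[nhds t] p := by
        filter_upwards [Ioo_mem_nhds ht ht1] with s hs
        rw [clamp_of_mem hs.1.le hs.2.le]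
      rw [clamp_of_mem ht.le ht1.le]
      exact (hp t).congr_of_eventuallyEq hev
    · -- t = 1
      subst ht1
      rw [clamp_of_ge_one le_rfl, h1]
      have hright : HasDerivWithinAt (fun s => p (clamp s)) 0 (Ici 1) 1 := by
        apply (hasDerivWithinAt_const (1:ℝ) (Ici (1:ℝ)) (p 1)).congr
        · intro s hs; rw [clamp_of_ge_one hs]
        · rw [clamp_of_ge_one le_rfl]
      have hleft : HasDerivWithinAt (fun s => p (clamp s)) 0 (Iic 1) 1 := by
        have hbase := ((hp 1).hasDerivWithinAt (s := Iic 1))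
        rw [h1] at hbase
        apply hbase.congr_of_eventuallyEq
        · filter_upwards [Ioc_mem_nhdsLE_of_mem (by simp : (1:ℝ) ∈ Ioc (0:ℝ) 1)] with s hs
          rw [clamp_of_mem hs.1.le hs.2]
        · rw [clamp_of_ge_one le_rfl]
      have := hleft.union hright
      rw [Iic_union_Ici] at this
      exact this.hasDerivAt (by simp)
    · -- t > 1
      have hev : (fun s => p (clamp s)) =ᶠ[nhds t] fun _ => p 1 := by
        filter_upwards [Ioi_mem_nhds ht1] with s hs
        rw [clamp_of_ge_one hs.le]
      rw [clamp_of_ge_one ht1.le, h1]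
      exact (hasDerivAt_const t (p 1)).congr_of_eventuallyEq hev

noncomputable def psic (t : ℝ) : ℝ := psi (clamp t)
noncomputable def dpsic (t : ℝ) : ℝ := dpsi (clamp t)
noncomputable def ddpsic (t : ℝ) : ℝ := ddpsi (clamp t)

lemma dpsi_zero : dpsi 0 = 0 := by simp [dpsi]
lemma dpsi_one : dpsi 1 = 0 := by norm_num [dpsi]
lemma ddpsi_zero : ddpsi 0 = 0 := by simp [ddpsi]
lemma ddpsi_one : ddpsi 1 = 0 := by norm_num [ddpsi]

lemma hasDerivAt_psic (t : ℝ) : HasDerivAt psic (dpsic t) t :=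
  hasDerivAt_comp_clamp psi dpsi hasDerivAt_psi dpsi_zero dpsi_one t

lemma hasDerivAt_dpsic (t : ℝ) : HasDerivAt dpsic (ddpsic t) t :=
  hasDerivAt_comp_clamp dpsi ddpsi hasDerivAt_dpsi ddpsi_zero ddpsi_one t

section cutoff
variable (c : ℝ)

noncomputable def Fc (x : ℝ) : ℝ := psic (|x| - c)
noncomputable def Fc1 (x : ℝ) : ℝ := if 0 ≤ x then dpsic (x - c) else -dpsic (-x - c)
noncomputable def Fc2 (x : ℝ) : ℝ := ddpsic (|x| - c)

variable {c}

lemma psic_of_nonpos {t : ℝ} (h : t ≤ 0) : psic t = 0 := by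
  simp [psic, clamp_of_nonpos h, psi]

lemma dpsic_of_nonpos {t : ℝ} (h : t ≤ 0) : dpsic t = 0 := by
  simp [dpsic, clamp_of_nonpos h, dpsi_zero]

lemma hasDerivAt_Fc (hc : 0 < c) (x : ℝ) : HasDerivAt (Fc c) (Fc1 c x) x := by
  rcases lt_trichotomy x 0 with hx | hx | hx
  · have key : HasDerivAt (fun y : ℝ => psic (-y - c)) (-dpsic (-x - c)) x := by
      have inner : HasDerivAt (fun y : ℝ => -y - c) (-1) x := ((hasDerivAt_id x).neg).sub_const c
      have := (hasDerivAt_psic (-x - c)).comp x inner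
      convert this using 1 <;> first | rfl | (push_cast; ring)
    have hev : Fc c =ᶠ[nhds x] fun y => psic (-y - c) := by
      filter_upwards [Iio_mem_nhds hx] with y hy
      rw [Fc, abs_of_neg hy]
    have : Fc1 c x = -dpsic (-x - c) := by rw [Fc1, if_neg (not_le.mpr hx)]
    rw [this]
    exact key.congr_of_eventuallyEq hev
  · subst hx
    have hev : Fc c =ᶠ[nhds 0] fun _ => 0 := by
      filter_upwards [Ioo_mem_nhds (by linarith : -c < (0:ℝ)) hc] with y hy
      have hyc : |y| < c := abs_lt.mpr ⟨hy.1, hy.2⟩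
      rw [Fc, psic_of_nonpos (by linarith)]
    have : Fc1 c 0 = 0 := by
      rw [Fc1, if_pos le_rfl]
      exact dpsic_of_nonpos (by linarith)
    rw [this]
    exact (hasDerivAt_const 0 (0:ℝ)).congr_of_eventuallyEq hev
  · have key : HasDerivAt (fun y : ℝ => psic (y - c)) (dpsic (x - c)) x := by
      have inner : HasDerivAt (fun y : ℝ => y - c) 1 x := (hasDerivAt_id x).sub_const c
      have := (hasDerivAt_psic (x - c)).comp x inner
      convert this using 1 <;> first | rfl | (push_cast; ring)
    have hev : Fc c =ᶠ[nhds x] fun y => psic (y - c) := by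
      filter_upwards [Ioi_mem_nhds hx] with y hy
      rw [Fc, abs_of_pos hy]
    have : Fc1 c x = dpsic (x - c) := by rw [Fc1, if_pos hx.le]
    rw [this]
    exact key.congr_of_eventuallyEq hev

lemma hasDerivAt_Fc1 (hc : 0 < c) (x : ℝ) : HasDerivAt (Fc1 c) (Fc2 c x) x := by
  rcases lt_trichotomy x 0 with hx | hx | hx
  · have key : HasDerivAt (fun y : ℝ => -dpsic (-y - c)) (ddpsic (-x - c)) x := by
      have inner : HasDerivAt (fun y : ℝ => -y - c) (-1) x := ((hasDerivAt_id x).neg).sub_const c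
      have := ((hasDerivAt_dpsic (-x - c)).comp x inner).neg
      convert this using 1 <;> first | rfl | (push_cast; ring)
    have hev : Fc1 c =ᶠ[nhds x] fun y => -dpsic (-y - c) := by
      filter_upwards [Iio_mem_nhds hx] with y hy
      rw [Fc1, if_neg (not_le.mpr hy)]
    have : Fc2 c x = ddpsic (-x - c) := by rw [Fc2, abs_of_neg hx]
    rw [this]
    exact key.congr_of_eventuallyEq hev
  · subst hx
    have hev : Fc1 c =ᶠ[nhds 0] fun _ => 0 := by
      filter_upwards [Ioo_mem_nhds (by linarith : -c < (0:ℝ)) hc] with y hy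
      rw [Fc1]
      split
      · exact dpsic_of_nonpos (by linarith [hy.2])
      · rw [dpsic_of_nonpos (by linarith [hy.1]), neg_zero]
    have : Fc2 c 0 = 0 := by
      rw [Fc2, abs_zero, ddpsic, clamp_of_nonpos (by linarith), ddpsi_zero]
    rw [this]
    exact (hasDerivAt_const 0 (0:ℝ)).congr_of_eventuallyEq hev
  · have key : HasDerivAt (fun y : ℝ => dpsic (y - c)) (ddpsic (x - c)) x := by
      have inner : HasDerivAt (fun y : ℝ => y - c) 1 x := (hasDerivAt_id x).sub_const c
      have := (hasDerivAt_dpsic (x - c)).comp x inner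
      convert this using 1 <;> first | rfl | (push_cast; ring)
    have hev : Fc1 c =ᶠ[nhds x] fun y => dpsic (y - c) := by
      filter_upwards [Ioi_mem_nhds hx] with y hy
      rw [Fc1, if_pos hy.le]
    have : Fc2 c x = ddpsic (x - c) := by rw [Fc2, abs_of_pos hx]
    rw [this]
    exact key.congr_of_eventuallyEq hev

end cutoff

noncomputable def Mb : ℝ := ⨆ u : Set.Icc (0 : ℝ) 1, |deriv (deriv psi) (u : ℝ)|

lemma Mb_eq : Mb = ⨆ u : Set.Icc (0 : ℝ) 1, |ddpsi (u : ℝ)| := by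
  rw [Mb, deriv_deriv_psi]

lemma bdd_ddpsi : BddAbove (Set.range fun u : Set.Icc (0:ℝ) 1 => |ddpsi (u : ℝ)|) := by
  have : (Set.range fun u : Set.Icc (0:ℝ) 1 => |ddpsi (u : ℝ)|)
      = (fun t => |ddpsi t|) '' (Icc (0:ℝ) 1) := by
    ext y
    simp only [Set.mem_range, Set.mem_image, Subtype.exists, exists_prop]
  rw [this]
  have hcont : Continuous fun t : ℝ => |ddpsi t| := by
    unfold ddpsi; continuity
  exact (isCompact_Icc.image hcont).bddAbove

lemma le_Mb (t : ℝ) : |ddpsic t| ≤ Mb := by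
  rw [Mb_eq, ddpsic]
  exact le_ciSup bdd_ddpsi (⟨clamp t, clamp_mem t⟩ : Set.Icc (0:ℝ) 1)

lemma Mb_nonneg : 0 ≤ Mb := le_trans (abs_nonneg _) (le_Mb 0)

lemma Fc2_le (c x : ℝ) : |Fc2 c x| ≤ Mb := le_Mb _

lemma Fc1_lip (hc : 0 < c) (a b : ℝ) : |Fc1 c b - Fc1 c a| ≤ Mb * |b - a| := by
  have := Convex.norm_image_sub_le_of_norm_hasDerivWithin_le (f := Fc1 c) (f' := Fc2 c)
    (s := Set.univ) (C := Mb)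
    (fun y _ => (hasDerivAt_Fc1 hc y).hasDerivWithinAt)
    (fun y _ => Fc2_le c y) convex_univ (Set.mem_univ a) (Set.mem_univ b)
  simpa using this

lemma continuous_Fc1 (hc : 0 < c) : Continuous (Fc1 c) :=
  continuous_iff_continuousAt.mpr fun y => (hasDerivAt_Fc1 hc y).continuousAt

lemma taylor_Fc (hc : 0 < c) (x h : ℝ) :
    |Fc c (x + h) - Fc c x - Fc1 c x * h| ≤ Mb / 2 * h ^ 2 := by
  set φ : ℝ → ℝ := fun t => Fc c (x + t) - Fc c x - Fc1 c x * t with hφdef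
  have hφ : ∀ t : ℝ, HasDerivAt φ (Fc1 c (x + t) - Fc1 c x) t := by
    intro t
    have h1 : HasDerivAt (fun t : ℝ => Fc c (x + t)) (Fc1 c (x + t)) t := by
      have inner : HasDerivAt (fun t : ℝ => x + t) 1 t := (hasDerivAt_id t).const_add x
      have := (hasDerivAt_Fc hc (x + t)).comp t inner
      simpa using (show HasDerivAt (fun t : ℝ => Fc c (x + t)) (Fc1 c (x + t) * 1) t from this)
    have h2 : HasDerivAt (fun t : ℝ => Fc c x + Fc1 c x * t) (Fc1 c x) t := by
      simpa using ((hasDerivAt_id t).const_mul (Fc1 c x)).const_add (Fc c x)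
    have := h1.sub h2
    convert this using 2 <;> first | rfl | (funext s; simp only [hφdef, Pi.sub_apply]; ring) | ring
  have key : φ h = ∫ t in (0:ℝ)..h, (Fc1 c (x + t) - Fc1 c x) := by
    have := intervalIntegral.integral_eq_sub_of_hasDerivAt
      (f := φ) (f' := fun t => Fc1 c (x + t) - Fc1 c x) (a := 0) (b := h)
      (fun t _ => hφ t)
      (((((continuous_Fc1 hc).comp (continuous_const.add continuous_id)).sub
        continuous_const).intervalIntegrable 0 h))
    rw [this]
    simp [hφdef]
  have bound : ∀ᵐ t ∂(volume : Measure ℝ).restrict (Set.uIoc (0:ℝ) h),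
      ‖Fc1 c (x + t) - Fc1 c x‖ ≤ Mb * |t| := by
    filter_upwards with t
    have := Fc1_lip hc x (x + t)
    simpa using this
  have hint : IntervalIntegrable (fun t : ℝ => Mb * |t|) volume 0 h :=
    (continuous_const.mul continuous_abs).intervalIntegrable 0 h
  have := intervalIntegral.norm_integral_le_abs_of_norm_le bound hint
  rw [← key] at this
  refine le_trans this (le_of_eq ?_)
  rcases le_or_gt 0 h with hh | hh
  · rw [abs_eq_self.mpr (intervalIntegral.integral_nonneg hh (fun t _ => mul_nonneg Mb_nonneg (abs_nonneg _)))]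
    have : ∫ t in (0:ℝ)..h, Mb * |t| = ∫ t in (0:ℝ)..h, Mb * t := by
      apply intervalIntegral.integral_congr
      intro t ht
      rw [Set.uIcc_of_le hh] at ht
      show Mb * |t| = Mb * t
      rw [abs_of_nonneg ht.1]
    rw [this, intervalIntegral.integral_const_mul, integral_id]
    ring
  · rw [intervalIntegral.integral_symm, abs_neg,
      abs_eq_self.mpr (intervalIntegral.integral_nonneg hh.le (fun t _ => mul_nonneg Mb_nonneg (abs_nonneg _)))]
    have : ∫ t in h..(0:ℝ), Mb * |t| = ∫ t in h..(0:ℝ), Mb * (-t) := by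
      apply intervalIntegral.integral_congr
      intro t ht
      rw [Set.uIcc_of_le hh.le] at ht
      show Mb * |t| = Mb * (-t)
      rw [abs_of_nonpos ht.2]
    rw [this]
    have e2 : ∫ t in h..(0:ℝ), Mb * (-t) = -(Mb * (((0:ℝ)^2 - h^2)/2)) := by
      have : (fun t : ℝ => Mb * (-t)) = fun t : ℝ => -(Mb * t) := by funext t; ring
      rw [this, intervalIntegral.integral_neg, intervalIntegral.integral_const_mul, integral_id]
    rw [e2]
    ring

section integrals
variable {α : ℝ} (hα1 : 0 < α) (hα2 : α < 2)

lemma integrableOn_small (hα2 : α < 2) :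
    IntegrableOn (fun t : ℝ => t ^ (1 - α)) (Ioc (0:ℝ) 1) volume := by
  have h := intervalIntegral.intervalIntegrable_rpow' (a := 0) (b := 1)
    (by linarith : (-1:ℝ) < 1 - α)
  exact (intervalIntegrable_iff_integrableOn_Ioc_of_le zero_le_one).mp h

lemma integral_small (hα2 : α < 2) : ∫ t in Ioc (0:ℝ) 1, t ^ (1 - α) = 1 / (2 - α) := by
  rw [← intervalIntegral.integral_of_le zero_le_one]
  rw [integral_rpow (Or.inl (by linarith : (-1:ℝ) < 1 - α))]
  rw [Real.zero_rpow (by intro h; linarith : 1 - α + 1 ≠ 0), Real.one_rpow]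
  rw [show (1:ℝ) - α + 1 = 2 - α by ring]
  ring

lemma integrableOn_big (hα1 : 0 < α) {r : ℝ} (hr : 0 < r) :
    IntegrableOn (fun t : ℝ => t ^ (-(1 + α))) (Ioi r) volume :=
  integrableOn_Ioi_rpow_of_lt (by linarith) hr

lemma integral_big (hα1 : 0 < α) {r : ℝ} (hr : 0 < r) :
    ∫ t in Ioi r, t ^ (-(1 + α)) = r ^ (-α) / α := by
  rw [integral_Ioi_rpow_of_lt (by linarith) hr]
  rw [show -(1 + α) + 1 = -α by ring]
  rw [neg_div_neg_eq]

lemma integrable_comp_abs {G : ℝ → ℝ} (hG : IntegrableOn G (Ioi 0) volume) :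
    Integrable (fun h : ℝ => G |h|) volume := by
  have hIoi : IntegrableOn (fun h : ℝ => G |h|) (Ioi 0) volume :=
    hG.congr_fun (fun x hx => by rw [abs_of_pos hx]) measurableSet_Ioi
  have hIic : IntegrableOn (fun h : ℝ => G |h|) (Iic 0) volume := by
    rw [← Measure.map_neg_eq_self (volume : Measure ℝ)]
    have m : MeasurableEmbedding fun x : ℝ => -x := (Homeomorph.neg ℝ).measurableEmbedding
    rw [m.integrableOn_map_iff]
    simp_rw [Function.comp_def, abs_neg, neg_preimage, neg_Iic, neg_zero]
    exact (integrableOn_Ici_iff_integrableOn_Ioi).mpr hIoi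
  have : IntegrableOn (fun h : ℝ => G |h|) (Iic 0 ∪ Ioi 0) volume :=
    integrableOn_union.mpr ⟨hIic, hIoi⟩
  rwa [Iic_union_Ioi, integrableOn_univ] at this

end integrals

lemma abs_integral_le_comp_abs {g G : ℝ → ℝ}
    (hmeas : AEStronglyMeasurable g volume)
    (hG : IntegrableOn G (Ioi 0) volume)
    (hbound : ∀ h, |g h| ≤ G |h|) :
    |∫ h, g h| ≤ 2 * ∫ t in Ioi 0, G t := by
  have hGa : Integrable (fun h : ℝ => G |h|) volume := integrable_comp_abs hG
  have hgint : Integrable g volume :=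
    hGa.mono' hmeas (ae_of_all _ (fun h => by rw [Real.norm_eq_abs]; exact hbound h))
  calc |∫ h, g h| ≤ ∫ h, |g h| := by
        simpa [Real.norm_eq_abs] using norm_integral_le_integral_norm (μ := volume) g
    _ ≤ ∫ h, G |h| := integral_mono hgint.abs hGa hbound
    _ = 2 * ∫ t in Ioi 0, G t := integral_comp_abs

section dominators
variable {α : ℝ}

noncomputable def GA (α : ℝ) (t : ℝ) : ℝ := if t ≤ 1 then Mb / 2 * t ^ (1 - α) else t ^ (-(1 + α))
noncomputable def GB (α r : ℝ) (t : ℝ) : ℝ := if t ≤ r then 0 else t ^ (-(1 + α))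

lemma GA_int1 (hα2 : α < 2) : IntegrableOn (GA α) (Ioc (0:ℝ) 1) volume := by
  have h : IntegrableOn (fun t : ℝ => Mb / 2 * t ^ (1 - α)) (Ioc (0:ℝ) 1) volume :=
    (integrableOn_small hα2).const_mul (Mb / 2)
  exact h.congr_fun (fun t ht => by rw [GA, if_pos ht.2]) measurableSet_Ioc

lemma GA_int2 (hα1 : 0 < α) : IntegrableOn (GA α) (Ioi (1:ℝ)) volume :=
  (integrableOn_big hα1 one_pos).congr_fun
    (fun t ht => by rw [GA, if_neg (not_le.mpr ht)]) measurableSet_Ioi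

lemma GA_integrableOn (hα1 : 0 < α) (hα2 : α < 2) : IntegrableOn (GA α) (Ioi (0:ℝ)) volume := by
  rw [← Ioc_union_Ioi_eq_Ioi (zero_le_one (α := ℝ))]
  exact (GA_int1 hα2).union (GA_int2 hα1)

lemma GA_integral (hα1 : 0 < α) (hα2 : α < 2) :
    2 * ∫ t in Ioi (0:ℝ), GA α t = Mb / (2 - α) + 2 / α := by
  rw [← Ioc_union_Ioi_eq_Ioi (zero_le_one (α := ℝ)),
    setIntegral_union (Ioc_disjoint_Ioi le_rfl) measurableSet_Ioi (GA_int1 hα2) (GA_int2 hα1)]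
  have e1 : ∫ t in Ioc (0:ℝ) 1, GA α t = Mb / 2 * (1 / (2 - α)) := by
    rw [setIntegral_congr_fun measurableSet_Ioc
      (fun t (ht : t ∈ Ioc (0:ℝ) 1) => by rw [GA, if_pos ht.2]),
      integral_const_mul, integral_small hα2]
  have e2 : ∫ t in Ioi (1:ℝ), GA α t = 1 / α := by
    rw [setIntegral_congr_fun measurableSet_Ioi
      (fun t (ht : t ∈ Ioi (1:ℝ)) => by rw [GA, if_neg (not_le.mpr ht)]),
      integral_big hα1 one_pos, Real.one_rpow]
  rw [e1, e2]
  have h2α : (2:ℝ) - α ≠ 0 := by linarith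
  have hα : α ≠ 0 := ne_of_gt hα1
  field_simp

lemma GB_integrableOn (hα1 : 0 < α) {r : ℝ} (hr : 0 < r) :
    IntegrableOn (GB α r) (Ioi (0:ℝ)) volume := by
  rw [← Ioc_union_Ioi_eq_Ioi hr.le]
  refine IntegrableOn.union ?_ ?_
  · exact (integrable_zero _ _ _).integrableOn.congr_fun
      (fun t ht => by rw [GB, if_pos ht.2]; rfl) measurableSet_Ioc
  · exact (integrableOn_big hα1 hr).congr_fun
      (fun t ht => by rw [GB, if_neg (not_le.mpr ht)]) measurableSet_Ioi

lemma GB_integral (hα1 : 0 < α) {r : ℝ} (hr : 0 < r) :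
    2 * ∫ t in Ioi (0:ℝ), GB α r t = 2 / (α * r ^ α) := by
  rw [← Ioc_union_Ioi_eq_Ioi hr.le,
    setIntegral_union (Ioc_disjoint_Ioi le_rfl) measurableSet_Ioi
      ((integrable_zero _ _ _).integrableOn.congr_fun
        (fun t ht => by rw [GB, if_pos ht.2]; rfl) measurableSet_Ioc)
      ((integrableOn_big hα1 hr).congr_fun
        (fun t ht => by rw [GB, if_neg (not_le.mpr ht)]) measurableSet_Ioi)]
  have e1 : ∫ t in Ioc (0:ℝ) r, GB α r t = 0 := by
    rw [setIntegral_congr_fun measurableSet_Ioc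
      (fun t (ht : t ∈ Ioc (0:ℝ) r) => by rw [GB, if_pos ht.2])]
    simp
  have e2 : ∫ t in Ioi r, GB α r t = r ^ (-α) / α := by
    rw [setIntegral_congr_fun measurableSet_Ioi
      (fun t (ht : t ∈ Ioi r) => by rw [GB, if_neg (not_le.mpr ht)]),
      integral_big hα1 hr]
  rw [e1, e2, Real.rpow_neg hr.le]
  have hrα : 0 < r ^ α := Real.rpow_pos_of_pos hr α
  field_simp
  ring

end dominators

lemma Fc1_eq_zero {c x : ℝ} (h : |x| ≤ c) : Fc1 c x = 0 := by
  rw [Fc1]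
  split
  · exact dpsic_of_nonpos (by linarith [le_abs_self x])
  · rw [dpsic_of_nonpos (by linarith [neg_abs_le x]), neg_zero]

lemma psi_mem {u : ℝ} (h0 : 0 ≤ u) (h1 : u ≤ 1) : psi u ∈ Icc (0:ℝ) 1 := by
  constructor
  · rw [psi]; nlinarith [pow_nonneg h0 3, sq_nonneg (2*u - 5/2), sq_nonneg u]
  · rw [psi]
    nlinarith [pow_nonneg (by linarith : (0:ℝ) ≤ 1 - u) 3, sq_nonneg (2*(1-u) - 5/2),
      sq_nonneg (1-u)]

lemma fn_mem (N : ℕ) (x : ℝ) : fn N x ∈ Icc (0:ℝ) 1 := by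
  cases N with
  | zero => exact ⟨zero_le_one, le_rfl⟩
  | succ k =>
    have := clamp_mem (|x| - (k:ℝ))
    exact psi_mem this.1 this.2

theorem stmt12 (α : ℝ) (hα1 : 0 < α) (hα2 : α < 2) :
    ∀ n m : ℕ, 2 ≤ n → 2 ≤ m → m ≤ n → ∀ x : ℝ,
      |Dalpha α (fn n) x| ≤
        ((⨆ u : Set.Icc (0 : ℝ) 1, |deriv (deriv psi) (u : ℝ)|) / (2 - α) + 2 / α)
            * fn (n - m) x
          + 2 / (α * ((m : ℝ) - 1) ^ α) := by
  have hMb : (⨆ u : Set.Icc (0:ℝ) 1, |deriv (deriv psi) (u:ℝ)|) = Mb := rfl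
  intro n m hn hm hmn x
  rw [hMb]
  obtain ⟨k, rfl⟩ : ∃ k, n = k + 1 := ⟨n - 1, by omega⟩
  set c : ℝ := (k : ℝ) with hcdef
  have hk1 : 1 ≤ k := by omega
  have hc1 : 1 ≤ c := by rw [hcdef]; exact_mod_cast hk1
  have hc : 0 < c := by linarith
  have hm2 : (2:ℝ) ≤ (m:ℝ) := by exact_mod_cast hm
  have hfn : fn (k+1) = Fc c := rfl
  have hd : deriv (fn (k+1)) x = Fc1 c x := by rw [hfn]; exact (hasDerivAt_Fc hc x).deriv
  set g : ℝ → ℝ := fun h =>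
    (fn (k+1) (x + h) - fn (k+1) x - if |h| ≤ 1 then deriv (fn (k+1)) x * h else 0)
      / |h| ^ (1 + α) with hg
  have hDg : Dalpha α (fn (k+1)) x = ∫ h, g h := rfl
  have hcontf : Continuous (fn (k+1)) := by
    rw [hfn]
    exact continuous_iff_continuousAt.mpr fun y => (hasDerivAt_Fc hc y).continuousAt
  have hmeas : AEStronglyMeasurable g volume := by
    apply Measurable.aestronglyMeasurable
    apply Measurable.div
    · apply Measurable.sub
      · exact ((hcontf.comp (continuous_const.add continuous_id)).sub continuous_const).measurable
      · exact Measurable.ite (measurableSet_le continuous_abs.measurable measurable_const)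
          (measurable_const.mul measurable_id) measurable_const
    · exact (continuous_abs.rpow_const (fun y => Or.inr (by linarith))).measurable
  by_cases hx : |x| < c + 1 - (m:ℝ)
  · -- Case B : x far inside, integrand vanishes for |h| ≤ m - 1
    set r : ℝ := (m:ℝ) - 1 with hrdef
    have hr1 : 1 ≤ r := by rw [hrdef]; linarith
    have hr0 : 0 < r := by linarith
    have hzero : ∀ y : ℝ, |y| ≤ c → fn (k+1) y = 0 := by
      intro y hy
      rw [hfn]
      show psic (|y| - c) = 0
      exact psic_of_nonpos (by linarith)
    have hxc : |x| ≤ c := by linarith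
    have hfx : fn (k+1) x = 0 := hzero x hxc
    have hdx : deriv (fn (k+1)) x = 0 := by rw [hd]; exact Fc1_eq_zero hxc
    have bound : ∀ h, |g h| ≤ GB α r |h| := by
      intro h
      rcases le_or_gt |h| r with hh | hh
      · have h1 : fn (k+1) (x + h) = 0 := by
          apply hzero
          calc |x + h| ≤ |x| + |h| := abs_add_le x h
            _ ≤ c := by linarith
        have hg0 : g h = 0 := by
          rw [hg]
          simp only [h1, hfx, hdx, zero_mul, ite_self, sub_zero, zero_sub, neg_zero, zero_div,
            sub_self]
        rw [hg0, abs_zero, GB, if_pos hh]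
      · have hne : ¬ |h| ≤ 1 := by linarith
        rw [GB, if_neg (not_le.mpr hh)]
        have hden : 0 < |h| ^ (1+α) := Real.rpow_pos_of_pos (by linarith : 0 < |h|) _
        have hgh : g h = fn (k+1) (x + h) / |h| ^ (1 + α) := by
          rw [hg]; simp only [hfx, if_neg hne, sub_zero]
        have h01 := fn_mem (k+1) (x + h)
        have hnum : |fn (k+1) (x + h)| ≤ 1 := abs_le.mpr ⟨by linarith [h01.1], h01.2⟩
        rw [hgh, abs_div, abs_of_pos hden, Real.rpow_neg (abs_nonneg h), ← one_div]
        gcongr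
      -- maybe gcongr needs den ≠ 0
    have key := abs_integral_le_comp_abs hmeas (GB_integrableOn hα1 hr0) bound
    rw [GB_integral hα1 hr0] at key
    rw [hDg]
    have hC : 0 ≤ Mb / (2-α) + 2 / α :=
      add_nonneg (div_nonneg Mb_nonneg (by linarith)) (by positivity)
    have hfnm := (fn_mem (k+1-m) x).1
    have : 0 ≤ (Mb / (2-α) + 2/α) * fn (k+1-m) x := mul_nonneg hC hfnm
    rw [hrdef] at key
    linarith
  · -- Case A : f_{n-m}(x) = 1
    push_neg at hx
    have hfnm1 : fn (k+1-m) x = 1 := by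
      rcases Nat.eq_zero_or_pos (k+1-m) with h0 | hpos
      · rw [h0]; rfl
      · obtain ⟨j, hj⟩ := Nat.exists_eq_succ_of_ne_zero (Nat.pos_iff_ne_zero.mp hpos)
        rw [hj]
        show psi (min (max (|x| - (j:ℝ)) 0) 1) = 1
        have hjr : (j:ℝ) = c + 1 - m - 1 := by
          have h2 : ((j:ℕ):ℝ) + 1 = ((k+1-m : ℕ):ℝ) := by exact_mod_cast congrArg Nat.cast hj.symm
          rw [Nat.cast_sub hmn] at h2
          push_cast at h2 ⊢
          linarith
        have h1x : 1 ≤ |x| - j := by rw [hjr]; linarith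
        rw [max_eq_left (by linarith), min_eq_right h1x]
        norm_num [psi]
    have bound : ∀ h, |g h| ≤ GA α |h| := by
      intro h
      rcases le_or_gt |h| 1 with hh | hh
      · rw [GA, if_pos hh]
        by_cases h0 : h = 0
        · subst h0
          have hg0 : g 0 = 0 := by
            rw [hg]
            simp
          rw [hg0, abs_zero]
          exact mul_nonneg (div_nonneg Mb_nonneg (by norm_num)) (Real.rpow_nonneg le_rfl _)
        · have hpos : 0 < |h| := abs_pos.mpr h0
          have hden : 0 < |h| ^ (1+α) := Real.rpow_pos_of_pos hpos _
          have htay := taylor_Fc hc x h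
          have hgh0 : g h = (Fc c (x+h) - Fc c x - if |h| ≤ 1 then Fc1 c x * h else 0)
              / |h| ^ (1+α) := by
            rw [hg, hd, hfn]
          have hgh : g h = (Fc c (x+h) - Fc c x - Fc1 c x * h) / |h| ^ (1+α) := by
            rw [hgh0, if_pos hh]
          rw [hgh, abs_div, abs_of_pos hden]
          have step : |Fc c (x+h) - Fc c x - Fc1 c x * h| / |h| ^ (1+α)
              ≤ (Mb / 2 * h ^ 2) / |h| ^ (1+α) := by gcongr
          refine step.trans (le_of_eq ?_)
          have e : h ^ 2 / |h| ^ (1+α) = |h| ^ (1-α) := by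
            rw [← sq_abs, ← Real.rpow_natCast |h| 2, ← Real.rpow_sub hpos]
            congr 1
            push_cast
            ring
          rw [mul_div_assoc, e]
      · rw [GA, if_neg (not_le.mpr hh)]
        have hne : ¬ |h| ≤ 1 := not_le.mpr hh
        have hden : 0 < |h| ^ (1+α) := Real.rpow_pos_of_pos (by linarith : 0 < |h|) _
        have hgh : g h = (fn (k+1) (x+h) - fn (k+1) x) / |h| ^ (1+α) := by
          rw [hg]; simp only [if_neg hne, sub_zero]
        have h01 := fn_mem (k+1) (x + h)
        have h02 := fn_mem (k+1) x
        have hnum : |fn (k+1) (x+h) - fn (k+1) x| ≤ 1 :=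
          abs_sub_le_iff.mpr ⟨by linarith [h01.2, h02.1], by linarith [h01.1, h02.2]⟩
        rw [hgh, abs_div, abs_of_pos hden, Real.rpow_neg (abs_nonneg h), ← one_div]
        gcongr
    have key := abs_integral_le_comp_abs hmeas (GA_integrableOn hα1 hα2) bound
    rw [GA_integral hα1 hα2] at key
    rw [hDg, hfnm1, mul_one]
    have hr0 : (0:ℝ) ≤ (m:ℝ) - 1 := by linarith
    have tail : 0 ≤ 2 / (α * ((m:ℝ)-1) ^ α) :=
      div_nonneg (by norm_num) (mul_nonneg hα1.le (Real.rpow_nonneg hr0 _))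
    linarith
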